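/- Let c ∈ (5/6, 1] and let u_{2,±} = (−5+10c ± √5·√(5−16c+12c²)) / (8(2c²−c)) be the period-2 points of f(c,·), where f(c,x) = 4x(1−cx)/(1+4(1−c)x). Then the derivative with respect to x of the second iterate x ↦ f(c, f(c, x)), evaluated at x = u_{2,+} (equivalently at x = u_{2,−}), equals (63c²−84c+25)/(3c²−4c). -/

import Mathlib

noncomputable def f (c x : ℝ) : ℝ := 4 * x * (1 - c * x) / (1 + 4 * (1 - c) * x)

set_option maxHeartbeats 2000000 in
theorem second_iterate_deriv_at_period_two (c : ℝ) (hc : c ∈ Set.Ioc (5/6 : ℝ) 1) :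
    HasDerivAt (fun x : ℝ => f c (f c x))
      ((63 * c ^ 2 - 84 * c + 25) / (3 * c ^ 2 - 4 * c))
      ((-5 + 10 * c + Real.sqrt 5 * Real.sqrt (5 - 16 * c + 12 * c ^ 2)) /
        (8 * (2 * c ^ 2 - c))) ∧
    HasDerivAt (fun x : ℝ => f c (f c x))
      ((63 * c ^ 2 - 84 * c + 25) / (3 * c ^ 2 - 4 * c))
      ((-5 + 10 * c - Real.sqrt 5 * Real.sqrt (5 - 16 * c + 12 * c ^ 2)) /
        (8 * (2 * c ^ 2 - c))) := by
  obtain ⟨hc1, hc2⟩ := hc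
  set s : ℝ := Real.sqrt 5 * Real.sqrt (5 - 16 * c + 12 * c ^ 2) with hs_def
  have ha : (0:ℝ) ≤ 5 - 16 * c + 12 * c ^ 2 := by nlinarith
  have hs2 : s ^ 2 = 5 * (5 - 16 * c + 12 * c ^ 2) := by
    rw [hs_def, mul_pow, Real.sq_sqrt (by norm_num : (0:ℝ) ≤ 5), Real.sq_sqrt ha]
  have hs0 : (0:ℝ) ≤ s := mul_nonneg (Real.sqrt_nonneg _) (Real.sqrt_nonneg _)
  have hslt : s < 10 * c - 5 := by nlinarith
  have hE : (0:ℝ) < 8 * (2 * c ^ 2 - c) := by nlinarith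
  set u : ℝ := (-5 + 10 * c + s) / (8 * (2 * c ^ 2 - c)) with hu_def
  set v : ℝ := (-5 + 10 * c - s) / (8 * (2 * c ^ 2 - c)) with hv_def
  have hu0 : 0 < u := div_pos (by nlinarith) hE
  have hv0 : 0 < v := div_pos (by nlinarith) hE
  have hDu : 1 + 4 * (1 - c) * u ≠ 0 := by
    nlinarith [mul_nonneg (by linarith : (0:ℝ) ≤ 1 - c) hu0.le]
  have hDv : 1 + 4 * (1 - c) * v ≠ 0 := by
    nlinarith [mul_nonneg (by linarith : (0:ℝ) ≤ 1 - c) hv0.le]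
  have hder : ∀ x : ℝ, 1 + 4 * (1 - c) * x ≠ 0 →
      HasDerivAt (f c)
        (((4 - 8 * c * x) * (1 + 4 * (1 - c) * x) - 4 * x * (1 - c * x) * (4 * (1 - c))) /
          (1 + 4 * (1 - c) * x) ^ 2) x := by
    intro x hx
    have h2 : HasDerivAt (fun y : ℝ => 1 - c * y) (-c) x := by
      simpa using ((hasDerivAt_id x).const_mul c).const_sub 1
    have h3 : HasDerivAt (fun y : ℝ => 4 * y) 4 x := by
      simpa using (hasDerivAt_id x).const_mul 4
    have h1 : HasDerivAt (fun y : ℝ => 4 * y * (1 - c * y)) (4 - 8 * c * x) x := by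
      have h := h3.fun_mul h2
      exact h.congr_deriv (by ring)
    have h4 : HasDerivAt (fun y : ℝ => 1 + 4 * (1 - c) * y) (4 * (1 - c)) x := by
      simpa using ((hasDerivAt_id x).const_mul (4 * (1 - c))).const_add 1
    have h5 := h1.div h4 hx
    exact h5
  have key : 4 * (-5 + 10 * c + s) * ((8 * (2 * c ^ 2 - c)) - c * (-5 + 10 * c + s))
      = (-5 + 10 * c - s) * ((8 * (2 * c ^ 2 - c)) + 4 * (1 - c) * (-5 + 10 * c + s)) := by
    linear_combination (4 - 8 * c) * hs2
  have key2 : 4 * (-5 + 10 * c - s) * ((8 * (2 * c ^ 2 - c)) - c * (-5 + 10 * c - s))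
      = (-5 + 10 * c + s) * ((8 * (2 * c ^ 2 - c)) + 4 * (1 - c) * (-5 + 10 * c - s)) := by
    linear_combination (4 - 8 * c) * hs2
  have hfu : f c u = v := by
    rw [show f c u = 4 * u * (1 - c * u) / (1 + 4 * (1 - c) * u) from rfl, div_eq_iff hDu,
      hu_def, hv_def]
    have hc0 : c ≠ 0 := by linarith
    have h21 : 2 * c - 1 ≠ 0 := by linarith
    have h21' : c * 2 - 1 ≠ 0 := by linarith
    field_simp
    linear_combination (8 * (2 * c ^ 2 - c)) * key + (4 + 24 * c - 128 * c ^ 2 + 128 * c ^ 3) * hs2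
  have hfv : f c v = u := by
    rw [show f c v = 4 * v * (1 - c * v) / (1 + 4 * (1 - c) * v) from rfl, div_eq_iff hDv,
      hu_def, hv_def]
    have hc0 : c ≠ 0 := by linarith
    have h21 : 2 * c - 1 ≠ 0 := by linarith
    have h21' : c * 2 - 1 ≠ 0 := by linarith
    field_simp
    linear_combination (8 * (2 * c ^ 2 - c)) * key2 + (4 + 24 * c - 128 * c ^ 2 + 128 * c ^ 3) * hs2
  have h34 : 3 * c ^ 2 - 4 * c ≠ 0 := by nlinarith
  have hNu : (0:ℝ) < -5 + 10 * c + s := by nlinarith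
  have hNv : (0:ℝ) < -5 + 10 * c - s := by nlinarith
  have hDclu : (0:ℝ) < ((8 * (2 * c ^ 2 - c)) + 4 * (1 - c) * (-5 + 10 * c + s)) := by
    nlinarith [mul_nonneg (by linarith : (0:ℝ) ≤ 1 - c) hNu.le]
  have hDclv : (0:ℝ) < ((8 * (2 * c ^ 2 - c)) + 4 * (1 - c) * (-5 + 10 * c - s)) := by
    nlinarith [mul_nonneg (by linarith : (0:ℝ) ≤ 1 - c) hNv.le]
  have bigkey : ((4 * (8 * (2 * c ^ 2 - c)) - 8 * c * (-5 + 10 * c - s)) * ((8 * (2 * c ^ 2 - c)) + 4 * (1 - c) * (-5 + 10 * c - s)) - (4 * (-5 + 10 * c - s) * (8 * (2 * c ^ 2 - c)) - 4 * c * (-5 + 10 * c - s) ^ 2) * (4 * (1 - c))) * ((4 * (8 * (2 * c ^ 2 - c)) - 8 * c * (-5 + 10 * c + s)) * ((8 * (2 * c ^ 2 - c)) + 4 * (1 - c) * (-5 + 10 * c + s)) - (4 * (-5 + 10 * c + s) * (8 * (2 * c ^ 2 - c)) - 4 * c * (-5 + 10 * c + s) ^ 2) * (4 * (1 - c))) *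 (3 * c ^ 2 - 4 * c)
      = (63 * c ^ 2 - 84 * c + 25) * ((8 * (2 * c ^ 2 - c)) + 4 * (1 - c) * (-5 + 10 * c - s)) ^ 2 * ((8 * (2 * c ^ 2 - c)) + 4 * (1 - c) * (-5 + 10 * c + s)) ^ 2 := by
    linear_combination ((160000) + (-6400) * s ^ 2 + (-1689600) * c ^ 1 + (47104) * c ^ 1 * s ^ 2 + (7461120) * c ^ 2 + (-140544) * c ^ 2 * s ^ 2 + (-17861632) * c ^ 3 + (218112) * c ^ 3 * s ^ 2 + (25150464) * c ^ 4 + (-186368) * c ^ 4 * s ^ 2 + (-21161472) * c ^ 5 + (83456) * c ^ 5 * s ^ 2 + (10310656) * c ^ 6 + (-15360) * c ^ 6 * s ^ 2 + (-2623488) * c ^ 7 + (258048) * c ^ 8) * hs2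
  have equ : ((4 - 8 * c * u) * (1 + 4 * (1 - c) * u) - 4 * u * (1 - c * u) * (4 * (1 - c))) /
        (1 + 4 * (1 - c) * u) ^ 2 = ((4 * (8 * (2 * c ^ 2 - c)) - 8 * c * (-5 + 10 * c + s)) * ((8 * (2 * c ^ 2 - c)) + 4 * (1 - c) * (-5 + 10 * c + s)) - (4 * (-5 + 10 * c + s) * (8 * (2 * c ^ 2 - c)) - 4 * c * (-5 + 10 * c + s) ^ 2) * (4 * (1 - c))) / ((8 * (2 * c ^ 2 - c)) + 4 * (1 - c) * (-5 + 10 * c + s)) ^ 2 := by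
    have h3 := hDu; rw [hu_def] at h3
    rw [hu_def]
    have hc0 : c ≠ 0 := by linarith
    have h21 : 2 * c - 1 ≠ 0 := by linarith
    have h21' : c * 2 - 1 ≠ 0 := by linarith
    field_simp
  have eqv : ((4 - 8 * c * v) * (1 + 4 * (1 - c) * v) - 4 * v * (1 - c * v) * (4 * (1 - c))) /
        (1 + 4 * (1 - c) * v) ^ 2 = ((4 * (8 * (2 * c ^ 2 - c)) - 8 * c * (-5 + 10 * c - s)) * ((8 * (2 * c ^ 2 - c)) + 4 * (1 - c) * (-5 + 10 * c - s)) - (4 * (-5 + 10 * c - s) * (8 * (2 * c ^ 2 - c)) - 4 * c * (-5 + 10 * c - s) ^ 2) * (4 * (1 - c))) / ((8 * (2 * c ^ 2 - c)) + 4 * (1 - c) * (-5 + 10 * c - s)) ^ 2 := by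
    have h4 := hDv; rw [hv_def] at h4
    rw [hv_def]
    have hc0 : c ≠ 0 := by linarith
    have h21 : 2 * c - 1 ≠ 0 := by linarith
    have h21' : c * 2 - 1 ≠ 0 := by linarith
    field_simp
  have dval : ((4 - 8 * c * v) * (1 + 4 * (1 - c) * v) - 4 * v * (1 - c * v) * (4 * (1 - c))) /
        (1 + 4 * (1 - c) * v) ^ 2 *
      (((4 - 8 * c * u) * (1 + 4 * (1 - c) * u) - 4 * u * (1 - c * u) * (4 * (1 - c))) /
        (1 + 4 * (1 - c) * u) ^ 2)
      = (63 * c ^ 2 - 84 * c + 25) / (3 * c ^ 2 - 4 * c) := by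
    rw [equ, eqv, div_mul_div_comm, div_eq_div_iff (by positivity) h34]
    linear_combination bigkey
  have hDfu : 1 + 4 * (1 - c) * (f c u) ≠ 0 := by rw [hfu]; exact hDv
  have hDfv : 1 + 4 * (1 - c) * (f c v) ≠ 0 := by rw [hfv]; exact hDu
  have Hu := (hder (f c u) hDfu).comp u (hder u hDu)
  rw [hfu] at Hu
  have Hv := (hder (f c v) hDfv).comp v (hder v hDv)
  rw [hfv] at Hv
  constructor
  · have h := Hu
    rw [dval] at h
    exact h
  · have h := Hv
    rw [mul_comm, dval] at h
    exact h
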